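/- Let n ∈ ℕ, let p ∈ MvPolynomial (Fin n) ℝ be multilinear, and let a ≤ b be real numbers. Then for every x : Fin n → ℝ with x(i) ∈ [a, b] for all i, there exists y : Fin n → ℝ with y(i) ∈ {a, b} for all i such that eval y p ≥ eval x p. In particular, the maximum of p over the box [a, b]^n is attained at a vertex of the box. -/
import Mathlib

open MvPolynomial

private lemma eval_cons_affine {n : ℕ} (f : MvPolynomial (Fin (n + 1)) ℝ)
    (hf : f.degreeOf 0 ≤ 1) (z : Fin n → ℝ) (t : ℝ) :
    eval (Fin.cons t z) f =
      eval z ((finSuccEquiv ℝ n f).coeff 0) + eval z ((finSuccEquiv ℝ n f).coeff 1) * t := by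
  rw [eval_eq_eval_mv_eval']
  have hdeg : (Polynomial.map (eval z) (finSuccEquiv ℝ n f)).natDegree < 2 := by
    calc (Polynomial.map (eval z) (finSuccEquiv ℝ n f)).natDegree
        ≤ (finSuccEquiv ℝ n f).natDegree := Polynomial.natDegree_map_le
      _ = f.degreeOf 0 := natDegree_finSuccEquiv f
      _ < 2 := by omega
  rw [Polynomial.eval_eq_sum_range' hdeg]
  simp [Finset.sum_range_succ, Polynomial.coeff_map]


private lemma stmt8_aux : ∀ (n : ℕ) (p : MvPolynomial (Fin n) ℝ),
    (∀ i : Fin n, p.degreeOf i ≤ 1) → ∀ (a b : ℝ), a ≤ b →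
    ∀ (x : Fin n → ℝ), (∀ i, x i ∈ Set.Icc a b) →
    ∃ y : Fin n → ℝ, (∀ i, y i = a ∨ y i = b) ∧
      MvPolynomial.eval x p ≤ MvPolynomial.eval y p := by
  intro n
  induction n with
  | zero =>
    intro p _ a b _ x _
    refine ⟨x, fun i => i.elim0, le_refl _⟩
  | succ n ih =>
    intro p hp a b hab x hx
    set q := finSuccEquiv ℝ n p with hq
    set c0 := eval (Fin.tail x) (q.coeff 0)
    set c1 := eval (Fin.tail x) (q.coeff 1)
    set t : ℝ := if 0 ≤ c1 then b else a with ht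
    have hxcons : eval x p = c0 + c1 * x 0 := by
      conv_lhs => rw [← Fin.cons_self_tail x]
      exact eval_cons_affine p (hp 0) (Fin.tail x) (x 0)
    have hx0 := hx 0
    have hstep : eval x p ≤ c0 + c1 * t := by
      rw [hxcons, ht]
      split
      · nlinarith [hx0.2]
      · nlinarith [hx0.1, not_le.mp (by assumption)]
    -- the polynomial after fixing the first coordinate to t
    set p' : MvPolynomial (Fin n) ℝ := q.coeff 0 + C t * q.coeff 1 with hp'
    have hp'lin : ∀ i : Fin n, p'.degreeOf i ≤ 1 := by
      intro i
      calc p'.degreeOf i ≤ max ((q.coeff 0).degreeOf i) ((C t * q.coeff 1).degreeOf i) :=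
            degreeOf_add_le _ _ _
        _ ≤ 1 := by
            apply max_le
            · exact le_trans (degreeOf_coeff_finSuccEquiv p i 0) (hp i.succ)
            · exact le_trans (degreeOf_C_mul_le _ _ _)
                (le_trans (degreeOf_coeff_finSuccEquiv p i 1) (hp i.succ))
    have hxtail : ∀ i, Fin.tail x i ∈ Set.Icc a b := fun i => hx i.succ
    obtain ⟨z, hz, hzle⟩ := ih p' hp'lin a b hab (Fin.tail x) hxtail
    refine ⟨Fin.cons t z, ?_, ?_⟩
    · intro i
      refine Fin.cases ?_ (fun j => hz j) i
      simp only [Fin.cons_zero, ht]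
      split
      · exact Or.inr rfl
      · exact Or.inl rfl
    · have h1 : eval (Fin.cons t z) p = eval z p' := by
        rw [eval_cons_affine p (hp 0) z t, hp']
        simp
        ring
      have h2 : eval (Fin.tail x) p' = c0 + c1 * t := by
        simp [hp']
        ring
      rw [h1]
      calc eval x p ≤ c0 + c1 * t := hstep
        _ = eval (Fin.tail x) p' := h2.symm
        _ ≤ eval z p' := hzle

/-- A multilinear polynomial over the box `[a,b]^n` is maximized
at a vertex of the box: for every `x ∈ [a,b]^n` there is a vertex `y` (each
coordinate equal to `a` or `b`) with `eval y p ≥ eval x p`. -/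
theorem stmt8 (n : ℕ) (p : MvPolynomial (Fin n) ℝ)
    (hp : ∀ i : Fin n, p.degreeOf i ≤ 1)
    (a b : ℝ) (hab : a ≤ b)
    (x : Fin n → ℝ) (hx : ∀ i, x i ∈ Set.Icc a b) :
    ∃ y : Fin n → ℝ, (∀ i, y i = a ∨ y i = b) ∧
      MvPolynomial.eval x p ≤ MvPolynomial.eval y p := by
  exact stmt8_aux n p hp a b hab x hx
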